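/- arXiv:1205.5136 — 2 statements merged into one kernel-verified Lean document; each statement's English description precedes it below -/
import Mathlib

section
/- Subadditivity of the smooth conditional max-entropy: for random variables X, Y, Z on finite sets and ε, ε' ≥ 0 with ε + ε' < 1, H_max^{ε+ε'}(X,Y | Z) ≤ H_max^{ε}(X | Z) + H_max^{ε'}(Y | X,Z). -/
open scoped Classical
open Finset Real

/-- Probability of event `E` under distribution `p` on sample space `Ω`. -/
noncomputable def prE {Ω : Type*} [Fintype Ω] (p : Ω → ℝ) (E : Finset Ω) : ℝ :=
  ∑ ω ∈ E, p ω

/-- Sub-normalized joint mass P(f = a, g = b, Ω-event E); note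
`P_Y(b) · P_{XΩ|Y=b}(a) = P(X=a, Y=b, E)` under the paper's conventions. -/
noncomputable def jointE {Ω A B : Type*} [Fintype Ω] (p : Ω → ℝ) (f : Ω → A) (g : Ω → B)
    (E : Finset Ω) (a : A) (b : B) : ℝ :=
  ∑ ω ∈ E, if f ω = a ∧ g ω = b then p ω else 0

/-- Smooth conditional min-entropy
`H_min^ε(f|g) = max_{Ω : Pr[Ω] ≥ 1-ε} −log₂ ∑_b P_g(b) max_a P_{fΩ|g=b}(a)`. -/
noncomputable def HminSm {Ω A B : Type*} [Fintype Ω] [Fintype A] [Fintype B] [Nonempty A]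
    (p : Ω → ℝ) (f : Ω → A) (g : Ω → B) (ε : ℝ) : ℝ :=
  sSup { r | ∃ E : Finset Ω, 1 - ε ≤ prE p E ∧
    r = -Real.logb 2 (∑ b : B,
      Finset.univ.sup' Finset.univ_nonempty (fun a => jointE p f g E a b)) }

/-- Smooth conditional max-entropy
`H_max^ε(f|g) = min_{Ω : Pr[Ω] ≥ 1-ε} max_b log₂ |supp P_{fΩ|g=b}|`. -/
noncomputable def HmaxSm {Ω A B : Type*} [Fintype Ω] [Fintype A] [Fintype B] [Nonempty B]
    (p : Ω → ℝ) (f : Ω → A) (g : Ω → B) (ε : ℝ) : ℝ :=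
  sInf { r | ∃ E : Finset Ω, 1 - ε ≤ prE p E ∧
    r = Finset.univ.sup' Finset.univ_nonempty (fun b =>
      Real.logb 2 ((Finset.univ.filter (fun a => 0 < jointE p f g E a b)).card)) }

/-- `p` is a probability distribution. -/
def IsDist {Ω : Type*} [Fintype Ω] (p : Ω → ℝ) : Prop :=
  (∀ ω, 0 ≤ p ω) ∧ ∑ ω, p ω = 1

lemma logb_nat_nonneg (n : ℕ) : 0 ≤ Real.logb 2 n := by
  rcases Nat.eq_zero_or_pos n with h | h
  · simp [h]
  · exact Real.logb_nonneg (by norm_num) (by exact_mod_cast h)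

lemma jointE_nonneg' {Ω A B : Type*} [Fintype Ω] {p : Ω → ℝ} (hp : ∀ ω, 0 ≤ p ω)
    (f : Ω → A) (g : Ω → B) (E : Finset Ω) (a : A) (b : B) :
    0 ≤ jointE p f g E a b := by
  refine Finset.sum_nonneg fun ω _ => ?_
  split
  · exact hp ω
  · exact le_rfl

lemma jointE_pos_elem {Ω A B : Type*} [Fintype Ω] {p : Ω → ℝ} (hp : ∀ ω, 0 ≤ p ω)
    {f : Ω → A} {g : Ω → B} {E : Finset Ω} {a : A} {b : B}
    (h : 0 < jointE p f g E a b) :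
    ∃ ω ∈ E, f ω = a ∧ g ω = b ∧ 0 < p ω := by
  by_contra hc
  push_neg at hc
  have : jointE p f g E a b ≤ 0 := by
    refine Finset.sum_nonpos fun ω hω => ?_
    split
    · rename_i hcond
      exact le_of_not_gt (by intro hpos; exact absurd hpos (by simpa using hc ω hω hcond.1 hcond.2))
    · exact le_rfl
  linarith

lemma jointE_pos_of_elem {Ω A B : Type*} [Fintype Ω] {p : Ω → ℝ} (hp : ∀ ω, 0 ≤ p ω)
    {f : Ω → A} {g : Ω → B} {E : Finset Ω} {ω : Ω} (hω : ω ∈ E)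
    (hpω : 0 < p ω) : 0 < jointE p f g E (f ω) (g ω) := by
  have h1 : (if f ω = f ω ∧ g ω = g ω then p ω else 0) ≤ jointE p f g E (f ω) (g ω) :=
    Finset.single_le_sum (f := fun ω' => if f ω' = f ω ∧ g ω' = g ω then p ω' else 0)
      (fun ω' _ => by split; exacts [hp ω', le_rfl]) hω
  simpa using lt_of_lt_of_le (by simpa using hpω) h1

/-- Subadditivity of smooth conditional max-entropy:
`H_max^{ε+ε'}(X,Y | Z) ≤ H_max^{ε}(X | Z) + H_max^{ε'}(Y | X,Z)`. -/
theorem statement6 {Ω X Y Z : Type*} [Fintype Ω]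
    [Fintype X] [Fintype Y] [Fintype Z] [Nonempty X] [Nonempty Y] [Nonempty Z]
    (p : Ω → ℝ) (hp : IsDist p)
    (fX : Ω → X) (fY : Ω → Y) (fZ : Ω → Z)
    (ε ε' : ℝ) (hε : 0 ≤ ε) (hε' : 0 ≤ ε') (hsum : ε + ε' < 1) :
    HmaxSm p (fun ω => (fX ω, fY ω)) fZ (ε + ε') ≤
      HmaxSm p fX fZ ε + HmaxSm p fY (fun ω => (fX ω, fZ ω)) ε' := by
  obtain ⟨hp0, hp1⟩ := hp
  -- the three defining sets
  set fXY : Ω → X × Y := fun ω => (fX ω, fY ω) with hfXY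
  set fXZ : Ω → X × Z := fun ω => (fX ω, fZ ω) with hfXZ
  set S : Set ℝ := { r | ∃ E : Finset Ω, 1 - (ε + ε') ≤ prE p E ∧
    r = Finset.univ.sup' Finset.univ_nonempty (fun b =>
      Real.logb 2 ((Finset.univ.filter (fun a => 0 < jointE p fXY fZ E a b)).card)) } with hS
  set S1 : Set ℝ := { r | ∃ E : Finset Ω, 1 - ε ≤ prE p E ∧
    r = Finset.univ.sup' Finset.univ_nonempty (fun b =>
      Real.logb 2 ((Finset.univ.filter (fun a => 0 < jointE p fX fZ E a b)).card)) } with hS1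
  set S2 : Set ℝ := { r | ∃ E : Finset Ω, 1 - ε' ≤ prE p E ∧
    r = Finset.univ.sup' Finset.univ_nonempty (fun b =>
      Real.logb 2 ((Finset.univ.filter (fun a => 0 < jointE p fY fXZ E a b)).card)) } with hS2
  have hSeq : HmaxSm p fXY fZ (ε + ε') = sInf S := rfl
  have hS1eq : HmaxSm p fX fZ ε = sInf S1 := rfl
  have hS2eq : HmaxSm p fY fXZ ε' = sInf S2 := rfl
  have hprEuniv : prE p (Finset.univ : Finset Ω) = 1 := hp1
  have hS1ne : S1.Nonempty := ⟨_, Finset.univ, by rw [hprEuniv]; linarith, rfl⟩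
  have hS2ne : S2.Nonempty := ⟨_, Finset.univ, by rw [hprEuniv]; linarith, rfl⟩
  rw [hSeq, hS1eq, hS2eq]
  refine le_of_forall_pos_le_add fun δ hδ => ?_
  obtain ⟨r₁, hr₁S, hr₁lt⟩ := Real.lt_sInf_add_pos hS1ne (half_pos hδ)
  obtain ⟨r₂, hr₂S, hr₂lt⟩ := Real.lt_sInf_add_pos hS2ne (half_pos hδ)
  obtain ⟨E₁, hE₁, hr₁⟩ := hr₁S
  obtain ⟨E₂, hE₂, hr₂⟩ := hr₂S
  set E := E₁ ∩ E₂ with hE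
  -- probability bound
  have hprE : 1 - (ε + ε') ≤ prE p E := by
    have hu : prE p (E₁ ∪ E₂) ≤ 1 := by
      rw [← hp1]
      exact Finset.sum_le_sum_of_subset_of_nonneg (Finset.subset_univ _)
        (fun ω _ _ => hp0 ω)
    have hie : prE p (E₁ ∪ E₂) + prE p (E₁ ∩ E₂) = prE p E₁ + prE p E₂ :=
      Finset.sum_union_inter
    simp only [prE] at *
    linarith
  -- the supports
  set T : Z → Finset (X × Y) := fun z =>
    Finset.univ.filter (fun a => 0 < jointE p fXY fZ E a z) with hT
  set A1 : Z → Finset X := fun z =>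
    Finset.univ.filter (fun a => 0 < jointE p fX fZ E₁ a z) with hA1
  set A2 : X × Z → Finset Y := fun xz =>
    Finset.univ.filter (fun a => 0 < jointE p fY fXZ E₂ a xz) with hA2
  set M : ℕ := Finset.univ.sup' Finset.univ_nonempty (fun xz : X × Z => (A2 xz).card) with hM
  have hmem : ∀ z : Z, ∀ ab ∈ T z, ab.1 ∈ A1 z ∧ ab.2 ∈ A2 (ab.1, z) := by
    intro z ab hab
    simp only [hT, Finset.mem_filter, Finset.mem_univ, true_and] at hab
    obtain ⟨ω, hωE, hfab, hgz, hpω⟩ := jointE_pos_elem hp0 hab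
    have hωE₁ : ω ∈ E₁ := (Finset.mem_inter.mp hωE).1
    have hωE₂ : ω ∈ E₂ := (Finset.mem_inter.mp hωE).2
    have hx : fX ω = ab.1 := by rw [hfXY] at hfab; exact congrArg Prod.fst hfab
    have hy : fY ω = ab.2 := by rw [hfXY] at hfab; exact congrArg Prod.snd hfab
    constructor
    · simp only [hA1, Finset.mem_filter, Finset.mem_univ, true_and]
      have := jointE_pos_of_elem hp0 (f := fX) (g := fZ) hωE₁ hpω
      rwa [hx, hgz] at this
    · simp only [hA2, Finset.mem_filter, Finset.mem_univ, true_and]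
      have := jointE_pos_of_elem hp0 (f := fY) (g := fXZ) hωE₂ hpω
      rw [hy] at this
      have hxz : fXZ ω = (ab.1, z) := by rw [hfXZ]; simp [hx, hgz]
      rwa [hxz] at this
  -- cardinality bound
  have hcard : ∀ z : Z, (T z).card ≤ (A1 z).card * M := by
    intro z
    have h1 : (T z).card = ∑ x ∈ A1 z, ((T z).filter (fun ab => ab.1 = x)).card :=
      Finset.card_eq_sum_card_fiberwise (fun ab hab => (hmem z ab hab).1)
    have h2 : ∀ x ∈ A1 z, ((T z).filter (fun ab => ab.1 = x)).card ≤ M := by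
      intro x _
      have h3 : ((T z).filter (fun ab => ab.1 = x)).card ≤ (A2 (x, z)).card := by
        apply Finset.card_le_card_of_injOn (fun ab => ab.2)
        · intro ab hab
          rw [Finset.mem_coe, Finset.mem_filter] at hab
          have := (hmem z ab hab.1).2
          rwa [hab.2] at this
        · intro a ha b hb hab2
          rw [Finset.mem_coe, Finset.mem_filter] at ha hb
          exact Prod.ext (ha.2.trans hb.2.symm) hab2
      exact h3.trans (Finset.le_sup' (fun xz : X × Z => (A2 xz).card) (Finset.mem_univ (x, z)))
    calc (T z).card = _ := h1
      _ ≤ ∑ _x ∈ A1 z, M := Finset.sum_le_sum h2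
      _ = (A1 z).card * M := by rw [Finset.sum_const, smul_eq_mul]
  -- log bound
  have hlog : ∀ z : Z, Real.logb 2 ((T z).card) ≤ r₁ + r₂ := by
    intro z
    have hr₁0 : 0 ≤ r₁ := by
      rw [hr₁]
      exact le_trans (logb_nat_nonneg _)
        (Finset.le_sup' (fun b => Real.logb 2
          (((Finset.univ.filter (fun a => 0 < jointE p fX fZ E₁ a b)).card : ℕ) : ℝ))
          (Finset.mem_univ (Classical.arbitrary Z)))
    have hr₂0 : 0 ≤ r₂ := by
      rw [hr₂]
      exact le_trans (logb_nat_nonneg _)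
        (Finset.le_sup' (fun b => Real.logb 2
          (((Finset.univ.filter (fun a => 0 < jointE p fY fXZ E₂ a b)).card : ℕ) : ℝ))
          (Finset.mem_univ (Classical.arbitrary (X × Z))))
    rcases Nat.eq_zero_or_pos (T z).card with h0 | h0
    · rw [h0]; simp; linarith
    · have hA1pos : 0 < (A1 z).card := by
        rcases Nat.eq_zero_or_pos (A1 z).card with hc | hc
        · exfalso; have := hcard z; rw [hc, Nat.zero_mul] at this; omega
        · exact hc
      have hMpos : 0 < M := by
        rcases Nat.eq_zero_or_pos M with hc | hc
        · exfalso; have := hcard z; rw [hc, Nat.mul_zero] at this; omega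
        · exact hc
      have step1 : Real.logb 2 ((T z).card) ≤ Real.logb 2 (((A1 z).card : ℝ) * M) := by
        apply Real.logb_le_logb_of_le (by norm_num) (by exact_mod_cast h0)
        have := hcard z
        push_cast
        exact_mod_cast this
      have step2 : Real.logb 2 (((A1 z).card : ℝ) * M) =
          Real.logb 2 ((A1 z).card) + Real.logb 2 M :=
        Real.logb_mul (by positivity) (by positivity)
      have step3 : Real.logb 2 ((A1 z).card) ≤ r₁ := by
        rw [hr₁]
        exact Finset.le_sup' (fun b => Real.logb 2
          (((Finset.univ.filter (fun a => 0 < jointE p fX fZ E₁ a b)).card : ℕ) : ℝ))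
          (Finset.mem_univ z)
      have step4 : Real.logb 2 (M : ℝ) ≤ r₂ := by
        obtain ⟨xz₀, _, hxz₀⟩ := Finset.exists_mem_eq_sup' Finset.univ_nonempty
          (fun xz : X × Z => (A2 xz).card)
        rw [hr₂, hM, hxz₀]
        exact Finset.le_sup' (fun b => Real.logb 2
          (((Finset.univ.filter (fun a => 0 < jointE p fY fXZ E₂ a b)).card : ℕ) : ℝ))
          (Finset.mem_univ xz₀)
      linarith
  -- conclude
  have hmemS : (Finset.univ.sup' Finset.univ_nonempty (fun z : Z =>
      Real.logb 2 ((T z).card))) ∈ S := ⟨E, hprE, rfl⟩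
  have hbdd : BddBelow S := by
    refine ⟨0, fun s hs => ?_⟩
    obtain ⟨E', _, hs⟩ := hs
    rw [hs]
    exact le_trans (logb_nat_nonneg _)
      (Finset.le_sup' (fun b => Real.logb 2
        (((Finset.univ.filter (fun a => 0 < jointE p fXY fZ E' a b)).card : ℕ) : ℝ))
        (Finset.mem_univ (Classical.arbitrary Z)))
  have h5 : sInf S ≤ Finset.univ.sup' Finset.univ_nonempty (fun z : Z =>
      Real.logb 2 ((T z).card)) := csInf_le hbdd hmemS
  have h6 : Finset.univ.sup' Finset.univ_nonempty (fun z : Z =>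
      Real.logb 2 ((T z).card)) ≤ r₁ + r₂ :=
    Finset.sup'_le _ _ (fun z _ => hlog z)
  linarith
end

section
/- Block sampling bound: let y ∈ {0,1}^m be a bit string with m = bκ grouped into κ blocks of size b, let t be a uniformly random subset of [κ] of size ακ (α ∈ [0,1/2]), 𝒯 the corresponding set of bit positions and 𝒯̄ its complement, and let 𝒯' ⊆ 𝒯 include each element of 𝒯 independently with probability 1/2. Then for any δ > 0, Pr[ (1/|𝒯'|)·∑_{i∈𝒯'} y_i ≤ (1/((1−α)m))·∑_{i∈𝒯̄} y_i − δ ] ≤ 3·exp(−(1/2−ε)·α·κ·δ²/8) (with ε as in the paper's parameterization; in particular the probability is at most 3·exp(−ακδ²/16) when ε ≤ 1/4). -/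
open scoped Classical
open Finset

/-- Number of ones of the bit string `y` inside the index set `S`. -/
noncomputable def wgt {ι : Type*} (y : ι → Bool) (S : Finset ι) : ℝ :=
  ∑ i ∈ S, if y i then (1 : ℝ) else 0



/-- quadratic upper bound for `exp` on `[-1,1]`. -/
lemma exp_quad {x : ℝ} (hx : |x| ≤ 1) : Real.exp x ≤ 1 + x + (3/4) * x ^ 2 := by
  have h := Real.exp_bound hx (n := 2) (by norm_num)
  have h1 := (abs_sub_le_iff.mp h).1
  simp [Finset.sum_range_succ, Nat.factorial] at h1
  nlinarith [sq_abs x]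

/-- `exp x + 1 ≤ 2 exp (x/2 + x²/8)`. -/
lemma one_add_exp_le (x : ℝ) : Real.exp x + 1 ≤ 2 * Real.exp (x / 2 + x ^ 2 / 8) := by
  have hc : Real.cosh (x / 2) ≤ Real.exp ((x / 2) ^ 2 / 2) := Real.cosh_le_exp_half_sq _
  have he : Real.exp x + 1 = 2 * Real.exp (x / 2) * Real.cosh (x / 2) := by
    rw [Real.cosh_eq]
    have : Real.exp x = Real.exp (x/2) * Real.exp (x/2) := by
      rw [← Real.exp_add]; ring_nf
    rw [this]
    have h2 : Real.exp (x/2) * Real.exp (-x/2) = 1 := by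
      rw [← Real.exp_add]
      rw [show x / 2 + -x / 2 = 0 by ring]
      exact Real.exp_zero
    field_simp
    rw [neg_div] at h2
    nlinarith [h2]
  rw [he]
  have h2 : (x / 2) ^ 2 / 2 = x ^ 2 / 8 := by ring
  rw [h2] at hc
  have := mul_le_mul_of_nonneg_left hc (by positivity : (0:ℝ) ≤ 2 * Real.exp (x / 2))
  calc 2 * Real.exp (x / 2) * Real.cosh (x / 2)
      ≤ 2 * Real.exp (x / 2) * Real.exp (x ^ 2 / 8) := this
    _ = 2 * Real.exp (x / 2 + x ^ 2 / 8) := by rw [mul_assoc, ← Real.exp_add]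

/-- generalized Bernoulli: `B^(m+1) + (m+1) B^m y ≤ (B+y)^(m+1)` for `B ≥ 0`, `B + y ≥ 0`. -/
lemma bern_pow (B y : ℝ) (hB : 0 ≤ B) (hBy : 0 ≤ B + y) (m : ℕ) :
    B ^ (m + 1) + (m + 1) * B ^ m * y ≤ (B + y) ^ (m + 1) := by
  rcases eq_or_lt_of_le hB with h0 | hpos
  · -- B = 0
    have hy : 0 ≤ y := by rw [← h0] at hBy; linarith
    rw [← h0]
    cases m with
    | zero => simp
    | succ k =>
      have e1 : (0:ℝ) ^ (k + 1 + 1) = 0 := by norm_num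
      have e2 : (0:ℝ) ^ (k + 1) = 0 := by norm_num
      rw [e1, e2, zero_add]
      have : ((k:ℝ) + 1 + 1) * 0 * y = 0 := by ring
      rw [show ((k+1:ℕ):ℝ) + 1 = (k:ℝ) + 1 + 1 by push_cast; ring] at *
      rw [this]
      positivity
  · have ha : -2 ≤ y / B := by
      have : -1 ≤ y / B := by
        rw [le_div_iff₀ hpos]; linarith
      linarith
    have hber := one_add_mul_le_pow ha (m + 1)
    have hBpow : (0:ℝ) < B ^ (m + 1) := pow_pos hpos _
    have key := mul_le_mul_of_nonneg_left hber (le_of_lt hBpow)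
    calc B ^ (m + 1) + (m + 1) * B ^ m * y
        = B ^ (m + 1) * (1 + ((m:ℝ) + 1) * (y / B)) := by
          field_simp
          ring
      _ ≤ B ^ (m + 1) * (1 + y / B) ^ (m + 1) := by
          convert key using 3
          rfl
          push_cast
          ring
      _ = (B + y) ^ (m + 1) := by
          rw [← mul_pow]
          congr 1
          field_simp



/-- scalar step: `C(k,m+1) A^(m+1) + x C(k,m) A^m ≤ C(k+1,m+1) ((kA+x)/(k+1))^(m+1)`. -/
lemma choose_bern (k m : ℕ) (A x : ℝ) (hA : 0 ≤ A) (hx : 0 ≤ x) :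
    (k.choose (m+1) : ℝ) * A ^ (m+1) + x * (k.choose m : ℝ) * A ^ m
      ≤ ((k+1).choose (m+1) : ℝ) * (((k : ℝ) * A + x) / ((k : ℝ) + 1)) ^ (m+1) := by
  have hk1 : (0:ℝ) < (k:ℝ) + 1 := by positivity
  have hbern := bern_pow (((k:ℝ)+1) * A) (x - A) (by positivity) (by nlinarith) m
  have hrw : ((k:ℝ)+1) * A + (x - A) = (k:ℝ) * A + x := by ring
  rw [hrw, mul_pow, mul_pow] at hbern
  have hchoose : ((k+1).choose (m+1) : ℝ) * ((m:ℝ)+1) = ((k:ℝ)+1) * (k.choose m : ℝ) := by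
    have h := Nat.add_one_mul_choose_eq k m
    have h2 := congrArg (fun n : ℕ => (n:ℝ)) h
    push_cast at h2
    linarith
  have pascal : ((k+1).choose (m+1) : ℝ) = (k.choose m : ℝ) + (k.choose (m+1) : ℝ) := by
    exact_mod_cast Nat.choose_succ_succ k m
  have hEq : ((k+1).choose (m+1) : ℝ) *
        ((((k:ℝ)+1))^(m+1)*A^(m+1) + ((m:ℝ)+1)*(((((k:ℝ)+1))^m)*A^m)*(x-A))
      = (((k:ℝ)+1))^(m+1) * ((k.choose (m+1):ℝ)*A^(m+1) + x*(k.choose m:ℝ)*A^m) := by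
    linear_combination ((((k:ℝ)+1))^m * A^m * (x-A)) * hchoose
      + ((((k:ℝ)+1))^(m+1)*A^(m+1)) * pascal
  have hC0 : (0:ℝ) ≤ ((k+1).choose (m+1) : ℝ) := by positivity
  have h1 : ((k.choose (m+1):ℝ)*A^(m+1) + x*(k.choose m:ℝ)*A^m) * (((k:ℝ)+1))^(m+1)
      ≤ ((k+1).choose (m+1) : ℝ) * ((k:ℝ)*A+x)^(m+1) := by
    calc ((k.choose (m+1):ℝ)*A^(m+1) + x*(k.choose m:ℝ)*A^m) * (((k:ℝ)+1))^(m+1)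
        = ((k+1).choose (m+1) : ℝ) *
            ((((k:ℝ)+1))^(m+1)*A^(m+1) + ((m:ℝ)+1)*(((((k:ℝ)+1))^m)*A^m)*(x-A)) := by
          rw [hEq]; ring
      _ ≤ ((k+1).choose (m+1) : ℝ) * ((k:ℝ)*A+x)^(m+1) :=
          mul_le_mul_of_nonneg_left hbern hC0
  have hKpow : (0:ℝ) < (((k:ℝ)+1))^(m+1) := pow_pos hk1 _
  rw [div_pow, ← mul_div_assoc]
  exact (le_div_iff₀ hKpow).mpr h1

/-- Maclaurin-type bound: `k^r * e_r(f) ≤ C(k,r) (∑ f)^r` for nonnegative `f`. -/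
lemma esymm_mul_bound {ι : Type*} [DecidableEq ι] (f : ι → ℝ) (s : Finset ι)
    (hf : ∀ j ∈ s, 0 ≤ f j) : ∀ r : ℕ,
    (s.card : ℝ) ^ r * ∑ T ∈ s.powersetCard r, ∏ j ∈ T, f j
      ≤ (s.card.choose r : ℝ) * (∑ j ∈ s, f j) ^ r := by
  induction s using Finset.induction_on with
  | empty =>
    intro r
    cases r with
    | zero => simp
    | succ m => simp
  | @insert a s ha ih =>
    intro r
    have hf' : ∀ j ∈ s, 0 ≤ f j := fun j hj => hf j (mem_insert_of_mem hj)
    have hfa : 0 ≤ f a := hf a (mem_insert_self a s)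
    cases r with
    | zero => simp
    | succ m =>
      rw [Finset.card_insert_of_notMem ha, Finset.sum_insert ha,
        Finset.powersetCard_succ_insert ha m]
      -- disjointness
      have hdisj : Disjoint (powersetCard (m+1) s) ((powersetCard m s).image (insert a)) := by
        rw [Finset.disjoint_right]
        intro T hT1 hT2
        obtain ⟨U, hU, rfl⟩ := Finset.mem_image.mp hT1
        exact ha ((Finset.mem_powersetCard.mp hT2).1 (mem_insert_self a U))
      rw [Finset.sum_union hdisj]
      have himg : ∑ T ∈ (powersetCard m s).image (insert a), ∏ j ∈ T, f j
          = f a * ∑ U ∈ powersetCard m s, ∏ j ∈ U, f j := by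
        rw [Finset.sum_image, Finset.mul_sum]
        · apply Finset.sum_congr rfl
          intro U hU
          have haU : a ∉ U := fun h => ha ((Finset.mem_powersetCard.mp hU).1 h)
          rw [Finset.prod_insert haU]
        · intro x hx y hy hxy
          have hax : a ∉ x := fun h => ha ((Finset.mem_powersetCard.mp hx).1 h)
          have hay : a ∉ y := fun h => ha ((Finset.mem_powersetCard.mp hy).1 h)
          have := congrArg (fun T => Finset.erase T a) hxy
          simpa [Finset.erase_insert hax, Finset.erase_insert hay] using this
      rw [himg]
      set k := s.card with hk
      set P := ∑ T ∈ powersetCard (m+1) s, ∏ j ∈ T, f j with hP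
      set Q := ∑ U ∈ powersetCard m s, ∏ j ∈ U, f j with hQ
      set E := ∑ j ∈ s, f j with hE
      have hE0 : 0 ≤ E := Finset.sum_nonneg hf'
      have hP0 : 0 ≤ P := Finset.sum_nonneg fun T hT =>
        Finset.prod_nonneg fun j hj => hf' j ((Finset.mem_powersetCard.mp hT).1 hj)
      have hQ0 : 0 ≤ Q := Finset.sum_nonneg fun T hT =>
        Finset.prod_nonneg fun j hj => hf' j ((Finset.mem_powersetCard.mp hT).1 hj)
      have ih1 := ih hf' (m+1)
      have ih2 := ih hf' m
      rcases Nat.eq_zero_or_pos k with hk0 | hkpos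
      · -- s is empty
        have hsempty : s = ∅ := Finset.card_eq_zero.mp hk0
        have hPe : P = 0 := by rw [hP, hsempty, Finset.powersetCard_eq_empty.mpr (by simp)]; simp
        have hEe : E = 0 := by rw [hE, hsempty]; simp
        cases m with
        | zero =>
          have hQe : Q = 1 := by rw [hQ, hsempty]; simp
          rw [hPe, hQe, hEe, hk0]
          norm_num
        | succ l =>
          have hQe : Q = 0 := by
            rw [hQ, hsempty, Finset.powersetCard_eq_empty.mpr (by simp)]
            simp
          rw [hPe, hQe, hEe, hk0]
          have : (0+1).choose (l+1+1) = 0 := by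
            apply Nat.choose_eq_zero_of_lt; omega
          rw [this]
          norm_num
      · -- main case k ≥ 1
        have hkR : (0:ℝ) < (k:ℝ) := by exact_mod_cast hkpos
        set A := E / k with hA
        have hA0 : 0 ≤ A := by positivity
        have hEkA : E = (k:ℝ) * A := by rw [hA]; field_simp
        have hPle : P ≤ (k.choose (m+1) : ℝ) * A ^ (m+1) := by
          have hkpow : (0:ℝ) < (k:ℝ) ^ (m+1) := pow_pos hkR _
          rw [hEkA] at ih1
          rw [mul_pow] at ih1
          nlinarith [ih1]
        have hQle : Q ≤ (k.choose m : ℝ) * A ^ m := by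
          have hkpow : (0:ℝ) < (k:ℝ) ^ m := pow_pos hkR _
          rw [hEkA] at ih2
          rw [mul_pow] at ih2
          nlinarith [ih2]
        have hcb := choose_bern k m A (f a) hA0 hfa
        have hstep : P + f a * Q ≤ ((k+1).choose (m+1) : ℝ) *
            (((k:ℝ)*A + f a) / ((k:ℝ)+1)) ^ (m+1) := by
          calc P + f a * Q ≤ (k.choose (m+1) : ℝ) * A ^ (m+1) + f a * ((k.choose m : ℝ) * A ^ m) := by
                apply add_le_add hPle
                exact mul_le_mul_of_nonneg_left hQle hfa
            _ = (k.choose (m+1) : ℝ) * A ^ (m+1) + f a * (k.choose m : ℝ) * A ^ m := by ring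
            _ ≤ _ := hcb
        have hfinal := mul_le_mul_of_nonneg_left hstep
          (pow_nonneg (by linarith) _ : (0:ℝ) ≤ ((k:ℝ)+1) ^ (m+1))
        have hcast : ((k+1:ℕ):ℝ) = (k:ℝ) + 1 := by push_cast; ring
        rw [hcast]
        calc ((k:ℝ) + 1) ^ (m+1) * (P + f a * Q) ≤
              ((k:ℝ)+1) ^ (m+1) * (((k+1).choose (m+1) : ℝ) *
                (((k:ℝ)*A + f a) / ((k:ℝ)+1)) ^ (m+1)) := hfinal
          _ = ((k+1).choose (m+1) : ℝ) * ((k:ℝ)*A + f a) ^ (m+1) := by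
              rw [div_pow]
              field_simp
          _ = ((k+1).choose (m+1) : ℝ) * (f a + E) ^ (m+1) := by
              rw [hEkA]; ring_nf



/-- Chernoff bound for independent fair coins. -/
lemma coin_bound {ι : Type*} [Fintype ι] [DecidableEq ι] (T : Finset ι) (v : ι → ℝ)
    (hv : ∀ i ∈ T, (v i) ^ 2 ≤ 1) {l : ℝ} (hl : 0 ≤ l) :
    ∑ c : ι → Bool, (if (∑ i ∈ T.filter (fun i => c i), v i) ≤ 0 then (1:ℝ) else 0)
      ≤ (2:ℝ) ^ (Fintype.card ι) *
          Real.exp (-(l * (∑ i ∈ T, v i)) / 2 + l ^ 2 * T.card / 8) := by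
  set N := Fintype.card ι
  set n := T.card with hn
  -- Step 1: indicator ≤ exponential
  have step1 : ∀ c : ι → Bool,
      (if (∑ i ∈ T.filter (fun i => c i), v i) ≤ 0 then (1:ℝ) else 0)
        ≤ Real.exp (-(l * ∑ i ∈ T.filter (fun i => c i), v i)) := by
    intro c
    split_ifs with h
    · apply Real.one_le_exp
      have : l * ∑ i ∈ T.filter (fun i => c i), v i ≤ 0 := mul_nonpos_of_nonneg_of_nonpos hl h
      linarith
    · positivity
  -- Step 2: rewrite the exponential as a product over T
  have step2 : ∀ c : ι → Bool,
      Real.exp (-(l * ∑ i ∈ T.filter (fun i => c i), v i))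
        = ∏ i ∈ T, (if c i then Real.exp (-(l * v i)) else 1) := by
    intro c
    rw [Finset.sum_filter, Finset.mul_sum, ← Finset.sum_neg_distrib, Real.exp_sum]
    apply Finset.prod_congr rfl
    intro i _
    split_ifs with h <;> simp [h]
  -- Steps 3&4: sum over coins factorizes
  have step34 : ∑ c : ι → Bool, ∏ i ∈ T, (if c i then Real.exp (-(l * v i)) else 1)
      = ∏ i : ι, (if i ∈ T then (Real.exp (-(l * v i)) + 1) else 2) := by
    have h1 : ∀ c : ι → Bool, ∏ i ∈ T, (if c i then Real.exp (-(l * v i)) else 1)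
        = ∏ i : ι, (if i ∈ T then (if c i then Real.exp (-(l * v i)) else 1) else 1) := by
      intro c
      rw [← Finset.prod_subset (Finset.subset_univ T)
        (fun i _ hi => if_neg hi)]
      exact Finset.prod_congr rfl (fun i hi => by rw [if_pos hi])
    rw [Finset.sum_congr rfl (fun c _ => h1 c)]
    rw [← Fintype.prod_sum (fun i (b : Bool) =>
      if i ∈ T then (if b then Real.exp (-(l * v i)) else 1) else 1)]
    apply Finset.prod_congr rfl
    intro i _
    rw [Fintype.sum_bool]
    by_cases h : i ∈ T <;> simp [h] <;> norm_num
  have step5 : ∏ i : ι, (if i ∈ T then (Real.exp (-(l * v i)) + 1) else 2)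
      = (∏ i ∈ T, (Real.exp (-(l * v i)) + 1)) * 2 ^ (N - n) := by
    rw [Finset.prod_ite]
    congr 1
    · apply Finset.prod_congr
      · simp [Finset.filter_univ_mem]
      · intros; rfl
    · rw [Finset.prod_const]
      congr 1
      have h2 : Finset.univ.filter (fun i => ¬ i ∈ T) = Tᶜ := by
        ext i; simp
      rw [h2, Finset.card_compl]
  have step6 : (∏ i ∈ T, (Real.exp (-(l * v i)) + 1))
      ≤ 2 ^ n * Real.exp (-(l * (∑ i ∈ T, v i)) / 2 + l ^ 2 * n / 8) := by
    have hfac : ∀ i ∈ T, Real.exp (-(l * v i)) + 1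
        ≤ 2 * Real.exp (-(l * v i) / 2 + l ^ 2 / 8) := by
      intro i hi
      calc Real.exp (-(l * v i)) + 1 ≤ 2 * Real.exp (-(l * v i) / 2 + (-(l * v i)) ^ 2 / 8) :=
            one_add_exp_le _
        _ ≤ 2 * Real.exp (-(l * v i) / 2 + l ^ 2 / 8) := by
            have h1 : (-(l * v i)) ^ 2 = l ^ 2 * (v i) ^ 2 := by ring
            have h2 : l ^ 2 * (v i) ^ 2 ≤ l ^ 2 * 1 :=
              mul_le_mul_of_nonneg_left (hv i hi) (by positivity)
            have h3 := Real.exp_le_exp.mpr (by nlinarith : -(l * v i) / 2 + (-(l * v i)) ^ 2 / 8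
              ≤ -(l * v i) / 2 + l ^ 2 / 8)
            linarith
    calc ∏ i ∈ T, (Real.exp (-(l * v i)) + 1)
        ≤ ∏ i ∈ T, 2 * Real.exp (-(l * v i) / 2 + l ^ 2 / 8) := by
          apply Finset.prod_le_prod
          · intro i _; positivity
          · exact hfac
      _ = 2 ^ n * Real.exp (∑ i ∈ T, (-(l * v i) / 2 + l ^ 2 / 8)) := by
          rw [Finset.prod_mul_distrib, Finset.prod_const, ← Real.exp_sum, hn]
      _ = 2 ^ n * Real.exp (-(l * (∑ i ∈ T, v i)) / 2 + l ^ 2 * n / 8) := by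
          congr 2
          rw [Finset.sum_add_distrib, Finset.sum_const, ← hn, nsmul_eq_mul,
            ← Finset.sum_div]
          have hid : ∑ i ∈ T, -(l * v i) = -(l * ∑ i ∈ T, v i) := by
            rw [Finset.mul_sum, ← Finset.sum_neg_distrib]
          rw [hid]
          ring
  -- assemble
  have hnN : n ≤ N := Finset.card_le_univ T
  calc ∑ c : ι → Bool, (if (∑ i ∈ T.filter (fun i => c i), v i) ≤ 0 then (1:ℝ) else 0)
      ≤ ∑ c : ι → Bool, Real.exp (-(l * ∑ i ∈ T.filter (fun i => c i), v i)) :=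
        Finset.sum_le_sum (fun c _ => step1 c)
    _ = (∏ i ∈ T, (Real.exp (-(l * v i)) + 1)) * 2 ^ (N - n) := by
        rw [Finset.sum_congr rfl (fun c _ => step2 c), step34, step5]
    _ ≤ (2 ^ n * Real.exp (-(l * (∑ i ∈ T, v i)) / 2 + l ^ 2 * n / 8)) * 2 ^ (N - n) :=
        mul_le_mul_of_nonneg_right step6 (by positivity)
    _ = (2:ℝ) ^ N * Real.exp (-(l * (∑ i ∈ T, v i)) / 2 + l ^ 2 * n / 8) := by
        rw [show (2:ℝ) ^ n * Real.exp (-(l * (∑ i ∈ T, v i)) / 2 + l ^ 2 * n / 8) * 2 ^ (N - n)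
          = ((2:ℝ) ^ n * 2 ^ (N - n)) * Real.exp (-(l * (∑ i ∈ T, v i)) / 2 + l ^ 2 * n / 8)
          by ring]
        rw [← pow_add, Nat.add_sub_cancel' hnN]



/-- Bernoulli-type mgf bound with easy constants:
`1 - p + p e^(-u) ≤ exp(-pu + (3/8)u²)` for `p ∈ [0,1]`, `u ∈ [0,1]`. -/
lemma bernoulli_mgf {p u : ℝ} (hp0 : 0 ≤ p) (hp1 : p ≤ 1) (hu0 : 0 ≤ u) (hu1 : u ≤ 1) :
    1 - p + p * Real.exp (-u) ≤ Real.exp (-(p * u) + (3/8) * u ^ 2) := by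
  have habs : |(-u)| ≤ 1 := by rw [abs_neg, abs_of_nonneg hu0]; exact hu1
  have habs' : |u| ≤ 1 := by rw [abs_of_nonneg hu0]; exact hu1
  rcases le_or_gt p (1/2) with hp | hp
  · -- p ≤ 1/2
    have h1 : Real.exp (-u) ≤ 1 - u + (3/4) * u ^ 2 := by
      have := exp_quad habs
      calc Real.exp (-u) ≤ 1 + (-u) + (3/4) * (-u) ^ 2 := this
        _ = 1 - u + (3/4) * u ^ 2 := by ring
    have h2 : 1 - p + p * Real.exp (-u) ≤ 1 + (-(p * u) + (3/4) * p * u ^ 2) := by nlinarith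
    have h3 : (1:ℝ) + (-(p * u) + (3/4) * p * u ^ 2)
        ≤ Real.exp (-(p * u) + (3/4) * p * u ^ 2) := by
      have := Real.add_one_le_exp (-(p * u) + (3/4) * p * u ^ 2)
      linarith
    have h4 : -(p * u) + (3/4) * p * u ^ 2 ≤ -(p * u) + (3/8) * u ^ 2 := by nlinarith
    calc 1 - p + p * Real.exp (-u) ≤ Real.exp (-(p * u) + (3/4) * p * u ^ 2) := le_trans h2 h3
      _ ≤ _ := Real.exp_le_exp.mpr h4
  · -- p > 1/2 : use the reflected bound
    set q := 1 - p with hq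
    have hq0 : 0 ≤ q := by simp [hq]; linarith
    have hq2 : q ≤ 1/2 := by simp [hq]; linarith
    have h1 : Real.exp u ≤ 1 + u + (3/4) * u ^ 2 := exp_quad habs'
    have key : 1 - p + p * Real.exp (-u) = Real.exp (-u) * (q * Real.exp u + p) := by
      have : Real.exp (-u) * Real.exp u = 1 := by
        rw [← Real.exp_add]; simp
      nlinarith [this]
    have h2 : q * Real.exp u + p ≤ 1 + (q * u + (3/4) * q * u ^ 2) := by nlinarith
    have h3 : (1:ℝ) + (q * u + (3/4) * q * u ^ 2)
        ≤ Real.exp (q * u + (3/4) * q * u ^ 2) := by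
      have := Real.add_one_le_exp (q * u + (3/4) * q * u ^ 2)
      linarith
    have h4 : Real.exp (-u) * (q * Real.exp u + p)
        ≤ Real.exp (-u) * Real.exp (q * u + (3/4) * q * u ^ 2) := by
      apply mul_le_mul_of_nonneg_left (le_trans h2 h3) (le_of_lt (Real.exp_pos _))
    rw [key]
    calc Real.exp (-u) * (q * Real.exp u + p)
        ≤ Real.exp (-u) * Real.exp (q * u + (3/4) * q * u ^ 2) := h4
      _ = Real.exp (-u + (q * u + (3/4) * q * u ^ 2)) := by rw [← Real.exp_add]
      _ ≤ Real.exp (-(p * u) + (3/8) * u ^ 2) := by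
          apply Real.exp_le_exp.mpr
          have : -u + q * u = -(p * u) := by rw [hq]; ring
          nlinarith

/-- t-side deviation bound: the fraction of size-`r` block subsets whose weight
falls `(5/16)δ` below the mean is at most `C(κ,r) exp(-25rδ²/384)`. -/
lemma tside_bound (κ b r : ℕ) (hκ : 0 < κ) (hb : 0 < b) (w : Fin κ → ℝ)
    (hw0 : ∀ j, 0 ≤ w j) (hwb : ∀ j, w j ≤ b) {δ : ℝ} (hδ0 : 0 < δ) (hδ1 : δ ≤ 1) :
    ∑ t ∈ Finset.powersetCard r (Finset.univ : Finset (Fin κ)),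
        (if (∑ j ∈ t, w j) < (r : ℝ) * b * ((∑ j, w j) / ((κ : ℝ) * b) - (5/16) * δ)
         then (1:ℝ) else 0)
      ≤ (κ.choose r : ℝ) * Real.exp (-(25 * r * δ ^ 2) / 384) := by
  have hκR : (0:ℝ) < κ := by exact_mod_cast hκ
  have hbR : (0:ℝ) < b := by exact_mod_cast hb
  set W := ∑ j, w j with hW
  set p := W / ((κ : ℝ) * b) with hp
  have hW0 : 0 ≤ W := Finset.sum_nonneg (fun j _ => hw0 j)
  have hWκb : W ≤ (κ:ℝ) * b := by
    rw [hW]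
    calc ∑ j, w j ≤ ∑ _j : Fin κ, (b:ℝ) := Finset.sum_le_sum (fun j _ => hwb j)
      _ = (κ:ℝ) * b := by rw [Finset.sum_const]; simp [mul_comm]
  have hp0 : 0 ≤ p := by positivity
  have hp1 : p ≤ 1 := by rw [hp, div_le_one (by positivity)]; exact hWκb
  set u : ℝ := (5/12) * δ with hu
  have hu0 : 0 ≤ u := by positivity
  have hu1 : u ≤ 1 := by rw [hu]; linarith
  set l : ℝ := u / b with hl
  have hl0 : 0 ≤ l := by positivity
  set θ0 : ℝ := (r : ℝ) * b * (p - (5/16) * δ) with hθ0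
  -- step 1: pointwise Chernoff
  have step1 : ∀ t : Finset (Fin κ), (if (∑ j ∈ t, w j) < θ0 then (1:ℝ) else 0)
      ≤ Real.exp (l * (θ0 - ∑ j ∈ t, w j)) := by
    intro t
    split_ifs with h
    · exact Real.one_le_exp (by nlinarith)
    · positivity
  -- step 2: expand the exponential into a product
  have step2 : ∀ t : Finset (Fin κ), Real.exp (l * (θ0 - ∑ j ∈ t, w j))
      = Real.exp (l * θ0) * ∏ j ∈ t, Real.exp (-(l * w j)) := by
    intro t
    rw [← Real.exp_sum]
    rw [← Real.exp_add]
    congr 1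
    rw [Finset.sum_neg_distrib, ← Finset.mul_sum]
    ring
  -- step 3: esymm bound
  have hf0 : ∀ j ∈ (Finset.univ : Finset (Fin κ)), 0 ≤ Real.exp (-(l * w j)) :=
    fun j _ => (Real.exp_pos _).le
  have step3 := esymm_mul_bound (fun j => Real.exp (-(l * w j))) Finset.univ hf0 r
  rw [Finset.card_univ, Fintype.card_fin] at step3
  -- step 4: chord bound for each factor
  have step4 : ∑ j : Fin κ, Real.exp (-(l * w j)) ≤ (κ:ℝ) * (1 - p + p * Real.exp (-u)) := by
    have hchord : ∀ j : Fin κ, Real.exp (-(l * w j))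
        ≤ 1 - w j / b + (w j / b) * Real.exp (-u) := by
      intro j
      have ha0 : 0 ≤ w j / b := div_nonneg (hw0 j) hbR.le
      have ha1 : w j / b ≤ 1 := by rw [div_le_one hbR]; exact hwb j
      have hcvx := convexOn_exp.2 (Set.mem_univ (-u)) (Set.mem_univ (0:ℝ))
        ha0 (by linarith : (0:ℝ) ≤ 1 - w j / b) (by ring : w j / (b:ℝ) + (1 - w j / b) = 1)
      simp only [smul_eq_mul, mul_zero, add_zero, Real.exp_zero, mul_one] at hcvx
      calc Real.exp (-(l * w j)) = Real.exp (w j / b * (-u)) := by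
            congr 1
            rw [hl]
            ring
        _ ≤ w j / b * Real.exp (-u) + (1 - w j / b) := hcvx
        _ = 1 - w j / b + (w j / b) * Real.exp (-u) := by ring
    calc ∑ j : Fin κ, Real.exp (-(l * w j))
        ≤ ∑ j : Fin κ, (1 - w j / b + (w j / b) * Real.exp (-u)) :=
          Finset.sum_le_sum (fun j _ => hchord j)
      _ = (κ:ℝ) - W / b + (W / b) * Real.exp (-u) := by
          rw [Finset.sum_add_distrib, Finset.sum_sub_distrib, Finset.sum_const,
            ← Finset.sum_div, ← Finset.sum_mul, ← Finset.sum_div, ← hW]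
          simp
      _ = (κ:ℝ) * (1 - p + p * Real.exp (-u)) := by
          rw [hp]
          field_simp
  -- step 5: Bernoulli mgf bound
  have step5 : 1 - p + p * Real.exp (-u) ≤ Real.exp (-(p * u) + (3/8) * u ^ 2) :=
    bernoulli_mgf hp0 hp1 hu0 hu1
  -- combine
  have hbase0 : (0:ℝ) ≤ 1 - p + p * Real.exp (-u) := by nlinarith [Real.exp_pos (-u)]
  have hsum_le : ∑ t ∈ Finset.powersetCard r (Finset.univ : Finset (Fin κ)),
      ∏ j ∈ t, Real.exp (-(l * w j))
      ≤ (κ.choose r : ℝ) * (1 - p + p * Real.exp (-u)) ^ r := by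
    have hκpow : (0:ℝ) < (κ:ℝ) ^ r := by positivity
    have h1 : (∑ j : Fin κ, Real.exp (-(l * w j))) ^ r
        ≤ ((κ:ℝ) * (1 - p + p * Real.exp (-u))) ^ r :=
      pow_le_pow_left₀ (Finset.sum_nonneg hf0) step4 r
    have h2 : ((κ:ℝ) * (1 - p + p * Real.exp (-u))) ^ r
        = (κ:ℝ) ^ r * (1 - p + p * Real.exp (-u)) ^ r := mul_pow _ _ _
    nlinarith [step3, pow_le_pow_left₀ (Finset.sum_nonneg hf0) step4 r,
      mul_le_mul_of_nonneg_left (le_trans (le_of_eq rfl) h1)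
        (by positivity : (0:ℝ) ≤ (κ.choose r : ℝ))]
  have hexp_r : (1 - p + p * Real.exp (-u)) ^ r
      ≤ Real.exp ((r:ℝ) * (-(p * u) + (3/8) * u ^ 2)) := by
    calc (1 - p + p * Real.exp (-u)) ^ r
        ≤ (Real.exp (-(p * u) + (3/8) * u ^ 2)) ^ r := pow_le_pow_left₀ hbase0 step5 r
      _ = Real.exp ((r:ℝ) * (-(p * u) + (3/8) * u ^ 2)) := by
          rw [← Real.exp_nat_mul]
  -- final exponent computation
  have hexpo : l * θ0 + (r:ℝ) * (-(p * u) + (3/8) * u ^ 2) = -(25 * r * δ ^ 2) / 384 := by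
    rw [hl, hθ0, hu]
    field_simp
    ring
  calc ∑ t ∈ Finset.powersetCard r (Finset.univ : Finset (Fin κ)),
        (if (∑ j ∈ t, w j) < θ0 then (1:ℝ) else 0)
      ≤ ∑ t ∈ Finset.powersetCard r (Finset.univ : Finset (Fin κ)),
          Real.exp (l * θ0) * ∏ j ∈ t, Real.exp (-(l * w j)) := by
        apply Finset.sum_le_sum
        intro t _
        rw [← step2 t]
        exact step1 t
    _ = Real.exp (l * θ0) * ∑ t ∈ Finset.powersetCard r (Finset.univ : Finset (Fin κ)),
          ∏ j ∈ t, Real.exp (-(l * w j)) := by rw [Finset.mul_sum]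
    _ ≤ Real.exp (l * θ0) * ((κ.choose r : ℝ) * (1 - p + p * Real.exp (-u)) ^ r) :=
        mul_le_mul_of_nonneg_left hsum_le (Real.exp_pos _).le
    _ ≤ Real.exp (l * θ0) * ((κ.choose r : ℝ) *
          Real.exp ((r:ℝ) * (-(p * u) + (3/8) * u ^ 2))) := by
        apply mul_le_mul_of_nonneg_left _ (Real.exp_pos _).le
        exact mul_le_mul_of_nonneg_left hexp_r (by positivity)
    _ = (κ.choose r : ℝ) * Real.exp (-(25 * r * δ ^ 2) / 384) := by
        rw [← hexpo, Real.exp_add]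
        ring

set_option maxHeartbeats 2000000 in
/-- Block sampling bound (Lemma 15): group `m = κ·b` positions into `κ` blocks of size
`b`, pick a uniform subset `t` of `[κ]` of size `r = ακ` determining the test positions
`𝒯`, and include each position of `𝒯` in `𝒯'` independently with probability 1/2.  The
probability (over `t` and the coins `c`) that the relative Hamming weight of `y` on `𝒯'`
falls below the relative weight on the complement `𝒯̄` by more than `δ` is at most
`3·exp(−ακδ²/16)`. -/
theorem statement19 (κ b r : ℕ) (hκ : 0 < κ) (hb : 0 < b)
    (α δ : ℝ) (hα0 : 0 ≤ α) (hα2 : α ≤ 1 / 2) (hr : (r : ℝ) = α * κ) (hδ : 0 < δ)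
    (y : Fin κ × Fin b → Bool) :
    (((Finset.powersetCard r (Finset.univ : Finset (Fin κ))).card * 2 ^ (κ * b) : ℝ))⁻¹ *
      ∑ t ∈ Finset.powersetCard r (Finset.univ : Finset (Fin κ)),
        ∑ c : Fin κ × Fin b → Bool,
          (if wgt y (Finset.univ.filter fun i : Fin κ × Fin b => i.1 ∈ t ∧ c i) /
                ((Finset.univ.filter fun i : Fin κ × Fin b => i.1 ∈ t ∧ c i).card : ℝ) ≤
              wgt y (Finset.univ.filter fun i : Fin κ × Fin b => i.1 ∉ t) /
                ((1 - α) * ((κ : ℝ) * b)) - δ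
           then (1 : ℝ) else 0)
      ≤ 3 * Real.exp (-(α * κ * δ ^ 2) / 16) := by
  have hκR : (0:ℝ) < κ := by exact_mod_cast hκ
  have hbR : (0:ℝ) < b := by exact_mod_cast hb
  have hb1 : (1:ℝ) ≤ b := by exact_mod_cast hb
  have hrκ : (r:ℝ) ≤ (κ:ℝ)/2 := by rw [hr]; nlinarith
  have hrκN : r ≤ κ := by
    have h : (r:ℝ) ≤ (κ:ℝ) := by linarith
    exact_mod_cast h
  have hκrpos : (0:ℝ) < ((κ:ℝ) - r) * b := by
    apply mul_pos _ hbR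
    linarith
  have hαc : (1 - α) * ((κ:ℝ) * b) = ((κ:ℝ) - r) * b := by rw [hr]; ring
  -- weights
  set w : Fin κ → ℝ := fun j => ∑ i : Fin b, (if y (j, i) then (1:ℝ) else 0) with hwdef
  set W : ℝ := ∑ j, w j with hWdef
  have hw0 : ∀ j, 0 ≤ w j := by
    intro j; rw [hwdef]
    apply Finset.sum_nonneg; intro i _; positivity
  have hwb : ∀ j, w j ≤ b := by
    intro j; rw [hwdef]
    calc ∑ i : Fin b, (if y (j, i) then (1:ℝ) else 0)
        ≤ ∑ _i : Fin b, (1:ℝ) := by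
          apply Finset.sum_le_sum; intro i _; split_ifs <;> norm_num
      _ = b := by rw [Finset.sum_const]; simp
  -- wgt is nonnegative
  have hwgt0 : ∀ (s : Finset (Fin κ × Fin b)), 0 ≤ wgt y s := by
    intro s; unfold wgt
    apply Finset.sum_nonneg; intro i _; positivity
  have hwgtcard : ∀ (s : Finset (Fin κ × Fin b)), wgt y s ≤ s.card := by
    intro s; unfold wgt
    calc ∑ i ∈ s, (if y i then (1:ℝ) else 0) ≤ ∑ _i ∈ s, (1:ℝ) := by
          apply Finset.sum_le_sum; intro i _; split_ifs <;> norm_num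
      _ = s.card := by rw [Finset.sum_const]; simp
  -- block sums
  have hsub : ∀ t : Finset (Fin κ),
      ∑ i ∈ (Finset.univ.filter fun i : Fin κ × Fin b => i.1 ∈ t), (if y i then (1:ℝ) else 0)
        = ∑ j ∈ t, w j := by
    intro t
    rw [Finset.sum_filter, Fintype.sum_prod_type]
    have h1 : ∀ j : Fin κ, (∑ i : Fin b, if (j, i).1 ∈ t then (if y (j, i) then (1:ℝ) else 0) else 0)
        = if j ∈ t then w j else 0 := by
      intro j
      by_cases h : j ∈ t
      · simp only [h, if_true]
        rfl
      · simp only [h, if_false]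
        simp
    rw [Finset.sum_congr rfl (fun j _ => h1 j), ← Finset.sum_filter, Finset.filter_univ_mem]
  have hcompl : ∀ t : Finset (Fin κ),
      wgt y (Finset.univ.filter fun i : Fin κ × Fin b => i.1 ∉ t) = W - ∑ j ∈ t, w j := by
    intro t
    unfold wgt
    have h2 := Finset.sum_filter_add_sum_filter_not Finset.univ
      (fun i : Fin κ × Fin b => i.1 ∈ t) (fun i => if y i then (1:ℝ) else 0)
    have h3 : ∑ i : Fin κ × Fin b, (if y i then (1:ℝ) else 0) = W := by
      rw [hWdef, Fintype.sum_prod_type]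
    rw [hsub t, h3] at h2
    linarith
  have hcomplw : ∀ t : Finset (Fin κ), t.card = r → W - ∑ j ∈ t, w j ≤ ((κ:ℝ) - r) * b := by
    intro t htc
    have h1 : W - ∑ j ∈ t, w j = ∑ j ∈ tᶜ, w j := by
      have := Finset.sum_add_sum_compl t w
      rw [← hWdef] at this
      linarith
    rw [h1]
    calc ∑ j ∈ tᶜ, w j ≤ ∑ _j ∈ tᶜ, (b:ℝ) := Finset.sum_le_sum (fun j _ => hwb j)
      _ = (tᶜ.card : ℝ) * b := by rw [Finset.sum_const]; simp [mul_comm]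
      _ = ((κ:ℝ) - r) * b := by
          rw [Finset.card_compl, Fintype.card_fin, htc, Nat.cast_sub hrκN]
  have hTcard : ∀ t : Finset (Fin κ), t.card = r →
      (Finset.univ.filter fun i : Fin κ × Fin b => i.1 ∈ t).card = r * b := by
    intro t htc
    have h : (Finset.univ.filter fun i : Fin κ × Fin b => i.1 ∈ t)
        = t ×ˢ (Finset.univ : Finset (Fin b)) := by
      ext i; simp [Finset.mem_product]
    rw [h, Finset.card_product, htc, Finset.card_univ, Fintype.card_fin]
  -- the normalizing constant
  have hNfun : Fintype.card (Fin κ × Fin b) = κ * b := by simp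
  have hsum1 : ∑ _c : Fin κ × Fin b → Bool, (1:ℝ) = 2 ^ (κ * b) := by
    rw [Finset.sum_const, Finset.card_univ]
    simp [Fintype.card_fun, hNfun]
  have hCval : (Finset.powersetCard r (Finset.univ : Finset (Fin κ))).card = κ.choose r := by
    rw [Finset.card_powersetCard, Finset.card_univ, Fintype.card_fin]
  have hCpos : 0 < κ.choose r := Nat.choose_pos hrκN
  have hinvpos : (0:ℝ) < ((Finset.powersetCard r (Finset.univ : Finset (Fin κ))).card
      * 2 ^ (κ * b) : ℝ) := by
    apply mul_pos _ (by positivity)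
    rw [hCval]
    exact_mod_cast hCpos
  have hRHSpos : (0:ℝ) < 3 * Real.exp (-(α * κ * δ ^ 2) / 16) := by positivity
  by_cases hδ1 : δ ≤ 1
  case neg =>
    -- δ > 1 : the event is empty
    push_neg at hδ1
    have hzero : ∀ t ∈ Finset.powersetCard r (Finset.univ : Finset (Fin κ)),
        ∀ c : Fin κ × Fin b → Bool,
        (if wgt y (Finset.univ.filter fun i : Fin κ × Fin b => i.1 ∈ t ∧ c i) /
                ((Finset.univ.filter fun i : Fin κ × Fin b => i.1 ∈ t ∧ c i).card : ℝ) ≤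
              wgt y (Finset.univ.filter fun i : Fin κ × Fin b => i.1 ∉ t) /
                ((1 - α) * ((κ : ℝ) * b)) - δ
           then (1 : ℝ) else 0) = 0 := by
      intro t ht c
      have htc : t.card = r := (Finset.mem_powersetCard.mp ht).2
      rw [if_neg]
      intro hcond
      have h1 : wgt y (Finset.univ.filter fun i : Fin κ × Fin b => i.1 ∉ t) /
          ((1 - α) * ((κ : ℝ) * b)) ≤ 1 := by
        rw [hαc, div_le_one hκrpos, hcompl t]
        exact hcomplw t htc
      have h2 : (0:ℝ) ≤ wgt y (Finset.univ.filter fun i : Fin κ × Fin b => i.1 ∈ t ∧ c i) /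
          ((Finset.univ.filter fun i : Fin κ × Fin b => i.1 ∈ t ∧ c i).card : ℝ) := by
        apply div_nonneg (hwgt0 _) (by positivity)
      linarith
    have : ∑ t ∈ Finset.powersetCard r (Finset.univ : Finset (Fin κ)),
        ∑ c : Fin κ × Fin b → Bool, (if wgt y (Finset.univ.filter fun i : Fin κ × Fin b => i.1 ∈ t ∧ c i) /
                ((Finset.univ.filter fun i : Fin κ × Fin b => i.1 ∈ t ∧ c i).card : ℝ) ≤
              wgt y (Finset.univ.filter fun i : Fin κ × Fin b => i.1 ∉ t) /
                ((1 - α) * ((κ : ℝ) * b)) - δ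
           then (1 : ℝ) else 0) = 0 := by
      apply Finset.sum_eq_zero
      intro t ht
      exact Finset.sum_eq_zero (fun c _ => hzero t ht c)
    rw [this, mul_zero]
    positivity
  case pos =>
  by_cases hr0 : r = 0
  case pos =>
    -- r = 0 : trivial bound by 1 ≤ 3
    have hα' : α = 0 := by
      rw [hr0] at hr
      push_cast at hr
      rcases mul_eq_zero.mp hr.symm with h | h
      · exact h
      · exact absurd h (by positivity)
    have hsum_le : ∑ t ∈ Finset.powersetCard r (Finset.univ : Finset (Fin κ)),
        ∑ c : Fin κ × Fin b → Bool, (if wgt y (Finset.univ.filter fun i : Fin κ × Fin b => i.1 ∈ t ∧ c i) /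
                ((Finset.univ.filter fun i : Fin κ × Fin b => i.1 ∈ t ∧ c i).card : ℝ) ≤
              wgt y (Finset.univ.filter fun i : Fin κ × Fin b => i.1 ∉ t) /
                ((1 - α) * ((κ : ℝ) * b)) - δ
           then (1 : ℝ) else 0)
        ≤ ((Finset.powersetCard r (Finset.univ : Finset (Fin κ))).card * 2 ^ (κ * b) : ℝ) := by
      calc _ ≤ ∑ _t ∈ Finset.powersetCard r (Finset.univ : Finset (Fin κ)),
            ∑ _c : Fin κ × Fin b → Bool, (1:ℝ) := by
            apply Finset.sum_le_sum; intro t _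
            apply Finset.sum_le_sum; intro c _
            split_ifs <;> norm_num
        _ = ((Finset.powersetCard r (Finset.univ : Finset (Fin κ))).card * 2 ^ (κ * b) : ℝ) := by
            rw [Finset.sum_congr rfl (fun t _ => hsum1), Finset.sum_const]
            simp [nsmul_eq_mul]
    calc _ ≤ (((Finset.powersetCard r (Finset.univ : Finset (Fin κ))).card * 2 ^ (κ * b) : ℝ))⁻¹
          * ((Finset.powersetCard r (Finset.univ : Finset (Fin κ))).card * 2 ^ (κ * b) : ℝ) := by
          apply mul_le_mul_of_nonneg_left hsum_le (by positivity)
      _ = 1 := inv_mul_cancel₀ (ne_of_gt hinvpos)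
      _ ≤ 3 * Real.exp (-(α * κ * δ ^ 2) / 16) := by
          rw [hα']
          rw [show -(0 * (κ:ℝ) * δ ^ 2) / 16 = 0 by ring, Real.exp_zero]
          norm_num
  case neg =>
  -- main case : 1 ≤ r, δ ≤ 1
  have hr1 : 1 ≤ r := Nat.one_le_iff_ne_zero.mpr hr0
  have hr1R : (1:ℝ) ≤ r := by exact_mod_cast hr1
  -- t-side bound
  have key_t := tside_bound κ b r hκ hb w hw0 hwb hδ hδ1
  rw [← hWdef] at key_t
  -- coin-side bound for good t
  have key_c : ∀ t ∈ Finset.powersetCard r (Finset.univ : Finset (Fin κ)),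
      ¬ ((∑ j ∈ t, w j) < (r : ℝ) * b * (W / ((κ : ℝ) * b) - (5/16) * δ)) →
      ∑ c : Fin κ × Fin b → Bool, (if wgt y (Finset.univ.filter fun i : Fin κ × Fin b => i.1 ∈ t ∧ c i) /
                ((Finset.univ.filter fun i : Fin κ × Fin b => i.1 ∈ t ∧ c i).card : ℝ) ≤
              wgt y (Finset.univ.filter fun i : Fin κ × Fin b => i.1 ∉ t) /
                ((1 - α) * ((κ : ℝ) * b)) - δ
           then (1 : ℝ) else 0)
        ≤ (2:ℝ) ^ (κ * b) * Real.exp (-((r:ℝ) * δ ^ 2) / 16) := by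
    intro t ht hgood
    push_neg at hgood
    have htc : t.card = r := (Finset.mem_powersetCard.mp ht).2
    set S : ℝ := ∑ j ∈ t, w j with hS
    clear_value S
    set θ : ℝ := wgt y (Finset.univ.filter fun i : Fin κ × Fin b => i.1 ∉ t) /
        ((1 - α) * ((κ : ℝ) * b)) - δ with hθ
    clear_value θ
    have hθval : θ = (W - S) / (((κ:ℝ) - r) * b) - δ := by
      rw [hθ, hαc, hcompl t, hS]
    by_cases hθneg : θ < 0
    · -- event impossible
      have : ∀ c : Fin κ × Fin b → Bool,
          (if wgt y (Finset.univ.filter fun i : Fin κ × Fin b => i.1 ∈ t ∧ c i) /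
                ((Finset.univ.filter fun i : Fin κ × Fin b => i.1 ∈ t ∧ c i).card : ℝ) ≤ θ
           then (1 : ℝ) else 0) = 0 := by
        intro c
        apply if_neg
        intro hcond
        exact absurd (le_trans (div_nonneg (hwgt0 _) (Nat.cast_nonneg _)) hcond)
          (not_le.mpr hθneg)
      rw [Finset.sum_congr rfl (fun c _ => this c)]
      simp
      positivity
    · push_neg at hθneg
      have hθ1 : θ ≤ 1 := by
        rw [hθval]
        have hcw := hcomplw t htc
        have h1 : (W - S) / (((κ:ℝ) - r) * b) ≤ 1 := by
          rw [div_le_one hκrpos, hS]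
          exact hcw
        linarith
      set T : Finset (Fin κ × Fin b) := Finset.univ.filter fun i : Fin κ × Fin b => i.1 ∈ t
        with hT
      clear_value T
      set v : Fin κ × Fin b → ℝ := fun i => (if y i then (1:ℝ) else 0) - θ with hv
      clear_value v
      have hv1 : ∀ i ∈ T, (v i) ^ 2 ≤ 1 := by
        intro i _
        simp only [hv]
        have h01 : (0:ℝ) ≤ (if y i then (1:ℝ) else 0) ∧ (if y i then (1:ℝ) else 0) ≤ 1 := by
          split_ifs <;> norm_num
        have hlo : -1 ≤ (if y i then (1:ℝ) else 0) - θ := by linarith [h01.1]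
        have hhi : (if y i then (1:ℝ) else 0) - θ ≤ 1 := by linarith [h01.2]
        nlinarith [hlo, hhi]
      have hTc : (T.card : ℝ) = (r:ℝ) * b := by
        rw [hT, hTcard t htc]; push_cast; ring
      have hsumT : ∑ i ∈ T, v i = S - ((r:ℝ) * b) * θ := by
        rw [hv]
        rw [Finset.sum_sub_distrib, Finset.sum_const, nsmul_eq_mul]
        rw [hT, hsub t, ← hS, hTcard t htc]
        push_cast
        ring
      -- margin
      have hmargin : (3/8) * ((r:ℝ) * b) * δ ≤ ∑ i ∈ T, v i := by
        have hn0 : (0:ℝ) < (r:ℝ)*b := by positivity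
        have hMpos : (0:ℝ) < ((κ:ℝ) - r) * b := hκrpos
        have hnM : (r:ℝ)*b ≤ ((κ:ℝ) - r) * b := by
          apply mul_le_mul_of_nonneg_right _ hbR.le
          linarith
        have hκbpos : (0:ℝ) < (κ:ℝ)*b := by positivity
        have hg2 : (r:ℝ)*b * (W / ((κ:ℝ)*b)) ≤ S + (5/16)*((r:ℝ)*b)*δ := by
          nlinarith [hgood]
        have e1 : (r:ℝ)*b * (W / ((κ:ℝ)*b)) * ((κ:ℝ)*b) = (r:ℝ)*b*W := by
          field_simp
        have hW' : (r:ℝ)*b*W ≤ (S + (5/16)*((r:ℝ)*b)*δ) * ((r:ℝ)*b + ((κ:ℝ)-r)*b) := by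
          have := mul_le_mul_of_nonneg_right hg2 hκbpos.le
          rw [e1] at this
          calc (r:ℝ)*b*W ≤ (S + (5/16)*((r:ℝ)*b)*δ) * ((κ:ℝ)*b) := this
            _ = (S + (5/16)*((r:ℝ)*b)*δ) * ((r:ℝ)*b + ((κ:ℝ)-r)*b) := by ring
        have hS0 : 0 ≤ S := by
          rw [hS]; exact Finset.sum_nonneg (fun j _ => hw0 j)
        have hcleared : (r:ℝ)*b * (W - S) ≤ (S + (5/8)*((r:ℝ)*b)*δ) * (((κ:ℝ)-r)*b) := by
          nlinarith [hW', mul_nonneg (mul_nonneg hn0.le hδ.le) (sub_nonneg.mpr hnM),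
            mul_nonneg hS0 (sub_nonneg.mpr hnM)]
        have h2 : (r:ℝ)*b * ((W - S) / (((κ:ℝ)-r)*b)) ≤ S + (5/8)*((r:ℝ)*b)*δ := by
          rw [← mul_div_assoc, div_le_iff₀ hMpos]
          exact hcleared
        rw [hsumT, hθval]
        nlinarith [h2]
      -- event implies nonpositive sum
      have himp : ∀ c : Fin κ × Fin b → Bool,
          (wgt y (Finset.univ.filter fun i : Fin κ × Fin b => i.1 ∈ t ∧ c i) /
            ((Finset.univ.filter fun i : Fin κ × Fin b => i.1 ∈ t ∧ c i).card : ℝ) ≤ θ) →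
          (∑ i ∈ T.filter (fun i => c i), v i) ≤ 0 := by
        intro c hcond
        have hFF : (Finset.univ.filter fun i : Fin κ × Fin b => i.1 ∈ t ∧ c i)
            = T.filter (fun i => c i) := by
          rw [hT, Finset.filter_filter]
        rw [hFF] at hcond
        set F := T.filter (fun i => c i) with hF
        have hwgtF : wgt y F = ∑ i ∈ F, (if y i then (1:ℝ) else 0) := rfl
        have hvF : ∑ i ∈ F, v i = (∑ i ∈ F, (if y i then (1:ℝ) else 0)) - (F.card : ℝ) * θ := by
          rw [hv, Finset.sum_sub_distrib, Finset.sum_const, nsmul_eq_mul]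
        rcases Nat.eq_zero_or_pos F.card with hFc | hFc
        · have : F = ∅ := Finset.card_eq_zero.mp hFc
          rw [this]
          simp
        · have hFcR : (0:ℝ) < (F.card : ℝ) := by exact_mod_cast hFc
          rw [hwgtF, div_le_iff₀ hFcR] at hcond
          rw [hvF]
          nlinarith
      have hstep : ∑ c : Fin κ × Fin b → Bool,
          (if wgt y (Finset.univ.filter fun i : Fin κ × Fin b => i.1 ∈ t ∧ c i) /
                ((Finset.univ.filter fun i : Fin κ × Fin b => i.1 ∈ t ∧ c i).card : ℝ) ≤ θ
           then (1 : ℝ) else 0)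
          ≤ ∑ c : Fin κ × Fin b → Bool,
            (if (∑ i ∈ T.filter (fun i => c i), v i) ≤ 0 then (1:ℝ) else 0) := by
        apply Finset.sum_le_sum
        intro c _
        split_ifs with h1 h2
        · exact le_refl 1
        · exact absurd (himp c h1) h2
        · norm_num
        · exact le_refl 0
      have hl34 : (0:ℝ) ≤ (3/4) * δ := by positivity
      have hcoin := coin_bound T v hv1 hl34
      rw [hNfun, hTc] at hcoin
      have hexp_le : -((3/4) * δ * (∑ i ∈ T, v i)) / 2 + ((3/4) * δ) ^ 2 * ((r:ℝ) * b) / 8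
          ≤ -((r:ℝ) * δ ^ 2) / 16 := by
        have h1 : -((3/4) * δ * (∑ i ∈ T, v i)) / 2
            ≤ -((3/4) * δ * ((3/8) * ((r:ℝ) * b) * δ)) / 2 := by
          have hm2 := mul_le_mul_of_nonneg_left hmargin
            (by positivity : (0:ℝ) ≤ (3/4)*δ)
          linarith
        have h2 : -((3/4) * δ * ((3/8) * ((r:ℝ) * b) * δ)) / 2
            + ((3/4) * δ) ^ 2 * ((r:ℝ) * b) / 8 = -(9/128) * ((r:ℝ) * b) * δ ^ 2 := by ring
        have h3 : -(9/128) * ((r:ℝ) * b) * δ ^ 2 ≤ -((r:ℝ) * δ ^ 2) / 16 := by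
          nlinarith [mul_nonneg (mul_nonneg (Nat.cast_nonneg r : (0:ℝ) ≤ (r:ℝ)) (sq_nonneg δ))
            (sub_nonneg.mpr hb1)]
        linarith
      calc ∑ c : Fin κ × Fin b → Bool,
          (if wgt y (Finset.univ.filter fun i : Fin κ × Fin b => i.1 ∈ t ∧ c i) /
                ((Finset.univ.filter fun i : Fin κ × Fin b => i.1 ∈ t ∧ c i).card : ℝ) ≤ θ
           then (1 : ℝ) else 0)
          ≤ ∑ c : Fin κ × Fin b → Bool,
            (if (∑ i ∈ T.filter (fun i => c i), v i) ≤ 0 then (1:ℝ) else 0) := hstep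
        _ ≤ (2:ℝ) ^ (κ * b) * Real.exp (-((3/4) * δ * (∑ i ∈ T, v i)) / 2
              + ((3/4) * δ) ^ 2 * ((r:ℝ) * b) / 8) := hcoin
        _ ≤ (2:ℝ) ^ (κ * b) * Real.exp (-((r:ℝ) * δ ^ 2) / 16) := by
            apply mul_le_mul_of_nonneg_left (Real.exp_le_exp.mpr hexp_le) (by positivity)
  -- per-t bound
  have per_t : ∀ t ∈ Finset.powersetCard r (Finset.univ : Finset (Fin κ)),
      ∑ c : Fin κ × Fin b → Bool, (if wgt y (Finset.univ.filter fun i : Fin κ × Fin b => i.1 ∈ t ∧ c i) /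
                ((Finset.univ.filter fun i : Fin κ × Fin b => i.1 ∈ t ∧ c i).card : ℝ) ≤
              wgt y (Finset.univ.filter fun i : Fin κ × Fin b => i.1 ∉ t) /
                ((1 - α) * ((κ : ℝ) * b)) - δ
           then (1 : ℝ) else 0)
        ≤ (2:ℝ) ^ (κ * b) * (if (∑ j ∈ t, w j) < (r : ℝ) * b * (W / ((κ : ℝ) * b) - (5/16) * δ)
            then (1:ℝ) else 0)
          + (2:ℝ) ^ (κ * b) * Real.exp (-((r:ℝ) * δ ^ 2) / 16) := by
    intro t ht
    by_cases hbad : (∑ j ∈ t, w j) < (r : ℝ) * b * (W / ((κ : ℝ) * b) - (5/16) * δ)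
    · rw [if_pos hbad, mul_one]
      have h1 : ∑ c : Fin κ × Fin b → Bool, (if wgt y (Finset.univ.filter fun i : Fin κ × Fin b => i.1 ∈ t ∧ c i) /
                ((Finset.univ.filter fun i : Fin κ × Fin b => i.1 ∈ t ∧ c i).card : ℝ) ≤
              wgt y (Finset.univ.filter fun i : Fin κ × Fin b => i.1 ∉ t) /
                ((1 - α) * ((κ : ℝ) * b)) - δ
           then (1 : ℝ) else 0) ≤ ∑ _c : Fin κ × Fin b → Bool, (1:ℝ) := by
        apply Finset.sum_le_sum; intro c _; split_ifs <;> norm_num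
      rw [hsum1] at h1
      have h2 : (0:ℝ) ≤ (2:ℝ) ^ (κ * b) * Real.exp (-((r:ℝ) * δ ^ 2) / 16) := by positivity
      linarith
    · rw [if_neg hbad, mul_zero, zero_add]
      exact key_c t ht hbad
  -- sum over t
  have total : ∑ t ∈ Finset.powersetCard r (Finset.univ : Finset (Fin κ)),
      ∑ c : Fin κ × Fin b → Bool, (if wgt y (Finset.univ.filter fun i : Fin κ × Fin b => i.1 ∈ t ∧ c i) /
                ((Finset.univ.filter fun i : Fin κ × Fin b => i.1 ∈ t ∧ c i).card : ℝ) ≤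
              wgt y (Finset.univ.filter fun i : Fin κ × Fin b => i.1 ∉ t) /
                ((1 - α) * ((κ : ℝ) * b)) - δ
           then (1 : ℝ) else 0)
      ≤ ((Finset.powersetCard r (Finset.univ : Finset (Fin κ))).card * 2 ^ (κ * b) : ℝ)
          * (2 * Real.exp (-((r:ℝ) * δ ^ 2) / 16)) := by
    have hexp1 : Real.exp (-(25 * (r:ℝ) * δ ^ 2) / 384) ≤ Real.exp (-((r:ℝ) * δ ^ 2) / 16) := by
      apply Real.exp_le_exp.mpr
      nlinarith
    calc ∑ t ∈ Finset.powersetCard r (Finset.univ : Finset (Fin κ)),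
        ∑ c : Fin κ × Fin b → Bool, (if wgt y (Finset.univ.filter fun i : Fin κ × Fin b => i.1 ∈ t ∧ c i) /
                ((Finset.univ.filter fun i : Fin κ × Fin b => i.1 ∈ t ∧ c i).card : ℝ) ≤
              wgt y (Finset.univ.filter fun i : Fin κ × Fin b => i.1 ∉ t) /
                ((1 - α) * ((κ : ℝ) * b)) - δ
           then (1 : ℝ) else 0)
        ≤ ∑ t ∈ Finset.powersetCard r (Finset.univ : Finset (Fin κ)),
            ((2:ℝ) ^ (κ * b) * (if (∑ j ∈ t, w j) < (r : ℝ) * b * (W / ((κ : ℝ) * b) - (5/16) * δ)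
            then (1:ℝ) else 0)
          + (2:ℝ) ^ (κ * b) * Real.exp (-((r:ℝ) * δ ^ 2) / 16)) :=
          Finset.sum_le_sum per_t
      _ = (2:ℝ) ^ (κ * b) * (∑ t ∈ Finset.powersetCard r (Finset.univ : Finset (Fin κ)),
            (if (∑ j ∈ t, w j) < (r : ℝ) * b * (W / ((κ : ℝ) * b) - (5/16) * δ) then (1:ℝ) else 0))
          + ((Finset.powersetCard r (Finset.univ : Finset (Fin κ))).card : ℝ)
            * ((2:ℝ) ^ (κ * b) * Real.exp (-((r:ℝ) * δ ^ 2) / 16)) := by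
          rw [Finset.sum_add_distrib, ← Finset.mul_sum, Finset.sum_const, nsmul_eq_mul]
      _ ≤ (2:ℝ) ^ (κ * b) * ((κ.choose r : ℝ) * Real.exp (-(25 * (r:ℝ) * δ ^ 2) / 384))
          + ((Finset.powersetCard r (Finset.univ : Finset (Fin κ))).card : ℝ)
            * ((2:ℝ) ^ (κ * b) * Real.exp (-((r:ℝ) * δ ^ 2) / 16)) := by
          apply add_le_add_left
          apply mul_le_mul_of_nonneg_left _ (by positivity)
          exact_mod_cast key_t
      _ ≤ ((Finset.powersetCard r (Finset.univ : Finset (Fin κ))).card * 2 ^ (κ * b) : ℝ)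
          * (2 * Real.exp (-((r:ℝ) * δ ^ 2) / 16)) := by
          rw [hCval]
          have h1 : (2:ℝ) ^ (κ * b) * ((κ.choose r : ℝ) * Real.exp (-(25 * (r:ℝ) * δ ^ 2) / 384))
              ≤ (2:ℝ) ^ (κ * b) * ((κ.choose r : ℝ) * Real.exp (-((r:ℝ) * δ ^ 2) / 16)) := by
            apply mul_le_mul_of_nonneg_left _ (by positivity)
            apply mul_le_mul_of_nonneg_left hexp1 (by positivity)
          nlinarith [h1]
  -- conclude
  have hfinal : (((Finset.powersetCard r (Finset.univ : Finset (Fin κ))).card * 2 ^ (κ * b) : ℝ))⁻¹ *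
      (((Finset.powersetCard r (Finset.univ : Finset (Fin κ))).card * 2 ^ (κ * b) : ℝ)
          * (2 * Real.exp (-((r:ℝ) * δ ^ 2) / 16)))
      = 2 * Real.exp (-((r:ℝ) * δ ^ 2) / 16) := by
    rw [← mul_assoc, inv_mul_cancel₀ (ne_of_gt hinvpos), one_mul]
  have hrw : -(α * κ * δ ^ 2) / 16 = -((r:ℝ) * δ ^ 2) / 16 := by rw [hr]
  rw [hrw]
  calc (((Finset.powersetCard r (Finset.univ : Finset (Fin κ))).card * 2 ^ (κ * b) : ℝ))⁻¹ *
      ∑ t ∈ Finset.powersetCard r (Finset.univ : Finset (Fin κ)),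
        ∑ c : Fin κ × Fin b → Bool,
          (if wgt y (Finset.univ.filter fun i : Fin κ × Fin b => i.1 ∈ t ∧ c i) /
                ((Finset.univ.filter fun i : Fin κ × Fin b => i.1 ∈ t ∧ c i).card : ℝ) ≤
              wgt y (Finset.univ.filter fun i : Fin κ × Fin b => i.1 ∉ t) /
                ((1 - α) * ((κ : ℝ) * b)) - δ
           then (1 : ℝ) else 0)
      ≤ (((Finset.powersetCard r (Finset.univ : Finset (Fin κ))).card * 2 ^ (κ * b) : ℝ))⁻¹ *
        (((Finset.powersetCard r (Finset.univ : Finset (Fin κ))).card * 2 ^ (κ * b) : ℝ)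
          * (2 * Real.exp (-((r:ℝ) * δ ^ 2) / 16))) :=
        mul_le_mul_of_nonneg_left total (by positivity)
    _ = 2 * Real.exp (-((r:ℝ) * δ ^ 2) / 16) := hfinal
    _ ≤ 3 * Real.exp (-((r:ℝ) * δ ^ 2) / 16) := by
        have := Real.exp_pos (-((r:ℝ) * δ ^ 2) / 16)
        linarith
end
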